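/- Let 1 < α ≤ 2, 0 ≤ β < α - 1, a < b, and q : [a,b] → ℝ continuous with ∫ₐᵇ max(q(t),0) dt ≤ Γ(α) · ((2α-2-β)/((b-a)(α-1)))^(α-1) · ((2α-2-β)/(α-1-β))^(α-1-β). Then there is no continuous function u : [a,b] → ℝ, not identically zero and positive on (a,b), satisfying u(t) = ∫ₐᵇ G(t,s) q(s) u(s) ds for all t ∈ [a,b]. -/

import Mathlib

open Real Set

noncomputable def G (a b α β t s : ℝ) : ℝ :=
  if s ≤ t then
    (1 / Real.Gamma α) *
      ((t - a) ^ (α - 1) * (b - s) ^ (α - 1 - β) / (b - a) ^ (α - 1 - β) -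
        (t - s) ^ (α - 1))
  else
    (1 / Real.Gamma α) *
      ((t - a) ^ (α - 1) * (b - s) ^ (α - 1 - β) / (b - a) ^ (α - 1 - β))

-- subadditivity of rpow for exponents in (0,1]
lemma rpow_add_le_add_rpow' {x y p : ℝ} (hx : 0 ≤ x) (hy : 0 ≤ y) (hp0 : 0 ≤ p) (hp1 : p ≤ 1) :
    (x + y) ^ p ≤ x ^ p + y ^ p := by
  have h := NNReal.coe_le_coe.2 (NNReal.rpow_add_le_add_rpow x.toNNReal y.toNNReal hp0 hp1)
  simpa [NNReal.coe_rpow, NNReal.coe_add, Real.coe_toNNReal _ hx, Real.coe_toNNReal _ hy] using h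

-- weighted AM-GM, strict version
lemma my_geom_lt {x y w : ℝ} (hx : 0 ≤ x) (hy : 0 ≤ y) (hw0 : 0 < w) (hw1 : w < 1)
    (hxy : x ≠ y) : x ^ w * y ^ (1 - w) < w * x + (1 - w) * y := by
  rcases hy.eq_or_lt with rfl | hy'
  · have hx' : 0 < x := hx.lt_of_ne (Ne.symm hxy)
    rw [Real.zero_rpow (by linarith), mul_zero]
    nlinarith
  · have hxy' : x / y - 1 ≠ 0 := by
      intro h
      apply hxy
      field_simp at h
      linarith
    have hdiv : 0 ≤ x / y := by positivity
    have key := rpow_one_add_lt_one_add_mul_self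
      (s := x / y - 1) (by linarith) hxy' hw0 hw1
    rw [add_sub_cancel] at key
    have key2 : y * ((x / y) ^ w) < y * (1 + w * (x / y - 1)) :=
      mul_lt_mul_of_pos_left key hy'
    have hl : y * ((x / y) ^ w) = x ^ w * y ^ (1 - w) := by
      rw [Real.div_rpow hx hy'.le, Real.rpow_sub hy', Real.rpow_one]
      field_simp
    have hr : y * (1 + w * (x / y - 1)) = w * x + (1 - w) * y := by
      field_simp
      ring
    rw [hl, hr] at key2
    exact key2

lemma my_geom_le {x y w : ℝ} (hx : 0 ≤ x) (hy : 0 ≤ y) (hw0 : 0 < w) (hw1 : w < 1) :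
    x ^ w * y ^ (1 - w) ≤ w * x + (1 - w) * y := by
  rcases eq_or_ne x y with rfl | h
  · rcases hx.eq_or_lt with rfl | hx'
    · rw [Real.zero_rpow (by linarith)]
      simp
    · rw [← Real.rpow_add hx', add_sub_cancel, Real.rpow_one]
      linarith
  · exact (my_geom_lt hx hy hw0 hw1 h).le

-- maximum of x^p * y^r given x + y fixed
lemma f_max {p r x y : ℝ} (hp : 0 < p) (hr : 0 < r) (hx : 0 ≤ x) (hy : 0 ≤ y)
    (hL : 0 < x + y) :
    x ^ p * y ^ r ≤ (p * (x + y) / (p + r)) ^ p * (r * (x + y) / (p + r)) ^ r ∧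
    (x ≠ p * (x + y) / (p + r) →
      x ^ p * y ^ r < (p * (x + y) / (p + r)) ^ p * (r * (x + y) / (p + r)) ^ r) := by
  set L := x + y with hLdef
  set P := p + r with hPdef
  have hP : 0 < P := by positivity
  set c₁ := p * L / P with hc₁
  set c₂ := r * L / P with hc₂
  have hc₁' : 0 < c₁ := by positivity
  have hc₂' : 0 < c₂ := by positivity
  set X := x / c₁ with hX
  set Y := y / c₂ with hY
  have hX0 : 0 ≤ X := by positivity
  have hY0 : 0 ≤ Y := by positivity
  set w := p / P with hw
  have hw0 : 0 < w := by positivity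
  have hw1 : w < 1 := by
    rw [hw, div_lt_one hP]
    linarith
  have h1w : 1 - w = r / P := by
    rw [hw]
    field_simp
    rw [hPdef]; ring
  have hsum : w * X + (1 - w) * Y = 1 := by
    rw [h1w, hX, hY, hc₁, hc₂, hw]
    field_simp
    ring
  have hxc : x = X * c₁ := by rw [hX, div_mul_cancel₀ _ hc₁'.ne']
  have hyc : y = Y * c₂ := by rw [hY, div_mul_cancel₀ _ hc₂'.ne']
  have ew : w * P = p := by rw [hw]; field_simp
  have ew2 : (1 - w) * P = r := by rw [h1w]; field_simp
  have e1 : x ^ p * y ^ r = (X ^ p * Y ^ r) * (c₁ ^ p * c₂ ^ r) := by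
    rw [hxc, hyc, Real.mul_rpow hX0 hc₁'.le, Real.mul_rpow hY0 hc₂'.le]
    ring
  have e2 : (X ^ w * Y ^ (1 - w)) ^ P = X ^ p * Y ^ r := by
    rw [Real.mul_rpow (Real.rpow_nonneg hX0 _) (Real.rpow_nonneg hY0 _),
      ← Real.rpow_mul hX0, ← Real.rpow_mul hY0, ew, ew2]
  have hC : 0 < c₁ ^ p * c₂ ^ r := by positivity
  have hZ0 : 0 ≤ X ^ w * Y ^ (1 - w) := by positivity
  constructor
  · have hZ1 : X ^ w * Y ^ (1 - w) ≤ 1 := by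
      have h := my_geom_le hX0 hY0 hw0 hw1
      linarith [hsum]
    have : (X ^ w * Y ^ (1 - w)) ^ P ≤ 1 := Real.rpow_le_one hZ0 hZ1 hP.le
    rw [e2] at this
    calc x ^ p * y ^ r = (X ^ p * Y ^ r) * (c₁ ^ p * c₂ ^ r) := e1
      _ ≤ 1 * (c₁ ^ p * c₂ ^ r) := by
          apply mul_le_mul_of_nonneg_right this hC.le
      _ = c₁ ^ p * c₂ ^ r := one_mul _
  · intro hne
    have hXY : X ≠ Y := by
      intro h
      apply hne
      have hX1 : X = 1 := by
        rw [← h] at hsum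
        have : X * (w + (1 - w)) = 1 := by linarith [hsum]
        simpa using this
      rw [hX] at hX1
      field_simp at hX1
      linarith
    have hZ1 : X ^ w * Y ^ (1 - w) < 1 := by
      have h := my_geom_lt hX0 hY0 hw0 hw1 hXY
      linarith [hsum]
    have : (X ^ w * Y ^ (1 - w)) ^ P < 1 := Real.rpow_lt_one hZ0 hZ1 hP
    rw [e2] at this
    calc x ^ p * y ^ r = (X ^ p * Y ^ r) * (c₁ ^ p * c₂ ^ r) := e1
      _ < 1 * (c₁ ^ p * c₂ ^ r) := by
          apply mul_lt_mul_of_pos_right this hC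
      _ = c₁ ^ p * c₂ ^ r := one_mul _

section Gbounds

variable {α β a b t s : ℝ}

lemma G_cont (hα : 1 < α) (hβα : β < α - 1) :
    Continuous (fun s => G a b α β t s) := by
  have hp : (0:ℝ) < α - 1 := by linarith
  have hr : (0:ℝ) < α - 1 - β := by linarith
  have c1 : Continuous (fun s : ℝ => (b - s) ^ (α - 1 - β)) :=
    (Real.continuous_rpow_const hr.le).comp (continuous_const.sub continuous_id)
  have c2 : Continuous (fun s : ℝ => (t - s) ^ (α - 1)) :=
    (Real.continuous_rpow_const hp.le).comp (continuous_const.sub continuous_id)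
  unfold G
  apply Continuous.if_le
  · exact continuous_const.mul (((continuous_const.mul c1).div_const _).sub c2)
  · exact continuous_const.mul ((continuous_const.mul c1).div_const _)
  · exact continuous_id
  · exact continuous_const
  · intro x hx
    simp only [hx, sub_self, Real.zero_rpow hp.ne', sub_zero]

lemma G_nonneg (hα : 1 < α) (hβα : β < α - 1) (hβ : 0 ≤ β) (hab : a < b)
    (ht : t ∈ Set.Icc a b) (hs : s ∈ Set.Icc a b) :
    0 ≤ G a b α β t s := by
  have hΓ : 0 < Real.Gamma α := Real.Gamma_pos_of_pos (by linarith)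
  have hp : (0:ℝ) < α - 1 := by linarith
  have hr : (0:ℝ) < α - 1 - β := by linarith
  have hrp : α - 1 - β ≤ α - 1 := by linarith
  obtain ⟨hta, htb⟩ := ht
  obtain ⟨hsa, hsb⟩ := hs
  unfold G
  split_ifs with hst
  · have key : (t - s) ^ (α - 1) ≤ (t - a) ^ (α - 1) * (b - s) ^ (α - 1 - β) / (b - a) ^ (α - 1 - β) := by
      have h1 : t - s ≤ (b - s) / (b - a) * (t - a) := by
        rw [div_mul_eq_mul_div, le_div_iff₀ (by linarith)]
        nlinarith
      have h2 : (t - s) ^ (α - 1) ≤ ((b - s) / (b - a) * (t - a)) ^ (α - 1) :=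
        Real.rpow_le_rpow (by linarith) h1 hp.le
      have h3 : ((b - s) / (b - a) * (t - a)) ^ (α - 1)
          = ((b - s) / (b - a)) ^ (α - 1) * (t - a) ^ (α - 1) :=
        Real.mul_rpow (div_nonneg (by linarith) (by linarith)) (by linarith)
      have h4 : ((b - s) / (b - a)) ^ (α - 1) ≤ ((b - s) / (b - a)) ^ (α - 1 - β) := by
        rcases eq_or_lt_of_le hsb with rfl | hsb'
        · simp only [sub_self, zero_div]
          rw [Real.zero_rpow hp.ne', Real.zero_rpow hr.ne']
        · apply Real.rpow_le_rpow_of_exponent_ge (div_pos (by linarith) (by linarith))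
          · rw [div_le_one (by linarith)]; linarith
          · exact hrp
      have h5 : ((b - s) / (b - a)) ^ (α - 1 - β)
          = (b - s) ^ (α - 1 - β) / (b - a) ^ (α - 1 - β) :=
        Real.div_rpow (by linarith : (0:ℝ) ≤ b - s) (by linarith : (0:ℝ) ≤ b - a) _
      calc (t - s) ^ (α - 1) ≤ ((b - s) / (b - a)) ^ (α - 1) * (t - a) ^ (α - 1) := by
            rw [← h3]; exact h2
        _ ≤ ((b - s) / (b - a)) ^ (α - 1 - β) * (t - a) ^ (α - 1) := by
            apply mul_le_mul_of_nonneg_right h4 (Real.rpow_nonneg (by linarith) _)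
        _ = (t - a) ^ (α - 1) * (b - s) ^ (α - 1 - β) / (b - a) ^ (α - 1 - β) := by
            rw [h5]; ring
    have : 0 ≤ (t - a) ^ (α - 1) * (b - s) ^ (α - 1 - β) / (b - a) ^ (α - 1 - β)
        - (t - s) ^ (α - 1) := by linarith
    exact mul_nonneg (by positivity) this
  · have h1 : 0 ≤ (t - a) ^ (α - 1) := Real.rpow_nonneg (by linarith) _
    have h2 : 0 ≤ (b - s) ^ (α - 1 - β) := Real.rpow_nonneg (by linarith) _
    exact mul_nonneg (by positivity)
      (div_nonneg (mul_nonneg h1 h2) (Real.rpow_nonneg (by linarith) _))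

lemma G_le (hα : 1 < α) (hα2 : α ≤ 2) (hβα : β < α - 1) (hβ : 0 ≤ β) (hab : a < b)
    (ht : t ∈ Set.Icc a b) (hs : s ∈ Set.Icc a b) :
    G a b α β t s ≤ (1 / Real.Gamma α) *
      ((s - a) ^ (α - 1) * (b - s) ^ (α - 1 - β) / (b - a) ^ (α - 1 - β)) := by
  have hΓ : 0 < Real.Gamma α := Real.Gamma_pos_of_pos (by linarith)
  have hp : (0:ℝ) < α - 1 := by linarith
  have hp1 : α - 1 ≤ 1 := by linarith
  have hr : (0:ℝ) < α - 1 - β := by linarith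
  obtain ⟨hta, htb⟩ := ht
  obtain ⟨hsa, hsb⟩ := hs
  unfold G
  split_ifs with hst
  · apply mul_le_mul_of_nonneg_left _ (by positivity)
    have h2 : (t - a) ^ (α - 1) ≤ (t - s) ^ (α - 1) + (s - a) ^ (α - 1) := by
      have := rpow_add_le_add_rpow' (x := t - s) (y := s - a)
        (by linarith) (by linarith) hp.le hp1
      have he : t - s + (s - a) = t - a := by ring
      rwa [he] at this
    have h6 : 0 ≤ (t - a) ^ (α - 1) - (s - a) ^ (α - 1) := by
      have := Real.rpow_le_rpow (x := s - a) (by linarith) (by linarith : s - a ≤ t - a) hp.le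
      linarith
    have h3 : (b - s) ^ (α - 1 - β) ≤ (b - a) ^ (α - 1 - β) :=
      Real.rpow_le_rpow (by linarith) (by linarith) hr.le
    have hba : (0:ℝ) < (b - a) ^ (α - 1 - β) := Real.rpow_pos_of_pos (by linarith) _
    rw [sub_le_iff_le_add, div_add' _ _ _ hba.ne', div_le_div_iff₀ hba hba]
    have hbs : 0 ≤ (b - s) ^ (α - 1 - β) := Real.rpow_nonneg (by linarith) _
    have k1 := mul_le_mul_of_nonneg_right h2 hbs
    have k2 := mul_le_mul_of_nonneg_left h3
      (Real.rpow_nonneg (show (0:ℝ) ≤ t - s by linarith) (α - 1))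
    nlinarith [k1, k2]
  · apply mul_le_mul_of_nonneg_left _ (by positivity)
    push_neg at hst
    have h1 : (t - a) ^ (α - 1) ≤ (s - a) ^ (α - 1) :=
      Real.rpow_le_rpow (by linarith) (by linarith) hp.le
    have hbs : 0 ≤ (b - s) ^ (α - 1 - β) := Real.rpow_nonneg (by linarith) _
    have hba : 0 < (b - a) ^ (α - 1 - β) := Real.rpow_pos_of_pos (by linarith) _
    exact div_le_div_of_nonneg_right (mul_le_mul_of_nonneg_right h1 hbs) hba.le

end Gbounds

theorem stmt_11 (α β a b : ℝ) (hα : 1 < α) (hα2 : α ≤ 2) (hβ : 0 ≤ β)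
    (hβα : β < α - 1) (hab : a < b) (q : ℝ → ℝ)
    (hq : ContinuousOn q (Set.Icc a b))
    (hint : ∫ t in a..b, max (q t) 0 ≤
      Real.Gamma α * ((2 * α - 2 - β) / ((b - a) * (α - 1))) ^ (α - 1) *
        ((2 * α - 2 - β) / (α - 1 - β)) ^ (α - 1 - β)) :
    ¬ ∃ u : ℝ → ℝ, ContinuousOn u (Set.Icc a b) ∧
      (∃ t ∈ Set.Icc a b, u t ≠ 0) ∧
      (∀ t ∈ Set.Ioo a b, 0 < u t) ∧
      ∀ t ∈ Set.Icc a b, u t = ∫ s in a..b, G a b α β t s * (q s * u s) := by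
  rintro ⟨u, hu, ⟨t', ht', hut'⟩, hupos, heq⟩
  have hΓ : 0 < Real.Gamma α := Real.Gamma_pos_of_pos (by linarith)
  have hp : (0:ℝ) < α - 1 := by linarith
  have hp1 : α - 1 ≤ 1 := by linarith
  have hr : (0:ℝ) < α - 1 - β := by linarith
  have hLpos : (0:ℝ) < b - a := by linarith
  have hPpos : (0:ℝ) < 2 * α - 2 - β := by linarith
  set A1 := ((2 * α - 2 - β) / ((b - a) * (α - 1))) ^ (α - 1) with hA1
  set A2 := ((2 * α - 2 - β) / (α - 1 - β)) ^ (α - 1 - β) with hA2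
  set Cst := ((α - 1) * (b - a) / (2 * α - 2 - β)) ^ (α - 1) *
    ((α - 1 - β) * (b - a) / (2 * α - 2 - β)) ^ (α - 1 - β) with hCst
  set K := 1 / Real.Gamma α * (Cst / (b - a) ^ (α - 1 - β)) with hK
  have hc1 : (0:ℝ) < (α - 1) * (b - a) / (2 * α - 2 - β) :=
    div_pos (mul_pos hp hLpos) hPpos
  have hc2 : (0:ℝ) < (α - 1 - β) * (b - a) / (2 * α - 2 - β) :=
    div_pos (mul_pos hr hLpos) hPpos
  have hCstpos : 0 < Cst :=
    mul_pos (Real.rpow_pos_of_pos hc1 _) (Real.rpow_pos_of_pos hc2 _)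
  have hbar : (0:ℝ) < (b - a) ^ (α - 1 - β) := Real.rpow_pos_of_pos hLpos _
  have hKpos : 0 < K := mul_pos (by positivity) (div_pos hCstpos hbar)
  -- u a = 0
  have hua : u a = 0 := by
    have hGa : Set.EqOn (fun s => G a b α β a s * (q s * u s)) 0 (Set.uIcc a b) := by
      intro s hs
      rw [Set.uIcc_of_le hab.le] at hs
      have h0 : G a b α β a s = 0 := by
        unfold G
        split_ifs with h
        · have hsa : s = a := le_antisymm h hs.1
          subst hsa
          simp [Real.zero_rpow hp.ne']
        · simp [Real.zero_rpow hp.ne']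
      simp [h0]
    rw [heq a (Set.left_mem_Icc.2 hab.le), intervalIntegral.integral_congr hGa]
    simp
  -- u nonneg on Icc
  have hunn : ∀ x ∈ Set.Icc a b, 0 ≤ u x := by
    intro x hx
    have hxc : x ∈ closure (Set.Ioo a b) := by rw [closure_Ioo hab.ne]; exact hx
    haveI hne : (nhdsWithin x (Set.Ioo a b)).NeBot :=
      mem_closure_iff_nhdsWithin_neBot.1 hxc
    have hcw := (hu x hx).mono Set.Ioo_subset_Icc_self
    exact ge_of_tendsto hcw (eventually_nhdsWithin_of_forall fun y hy => (hupos y hy).le)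
  -- maximum
  obtain ⟨t₀, ht₀, hmax'⟩ := isCompact_Icc.exists_isMaxOn (Set.nonempty_Icc.2 hab.le) hu
  have hmax : ∀ x ∈ Set.Icc a b, u x ≤ u t₀ := fun x hx => hmax' hx
  have hM : 0 < u t₀ := by
    have h1 : 0 < u t' := (hunn t' ht').lt_of_ne (Ne.symm hut')
    exact lt_of_lt_of_le h1 (hmax t' ht')
  -- continuity
  have hq' : ContinuousOn (fun s => max (q s) 0) (Set.Icc a b) := hq.sup continuousOn_const
  have hGc : Continuous (fun s => G a b α β t₀ s) := G_cont hα hβα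
  have hcont1 : ContinuousOn (fun s => G a b α β t₀ s * (q s * u s)) (Set.Icc a b) :=
    hGc.continuousOn.mul (hq.mul hu)
  have hcont2 : ContinuousOn (fun s => G a b α β t₀ s * (max (q s) 0 * u s)) (Set.Icc a b) :=
    hGc.continuousOn.mul (hq'.mul hu)
  have hint1 : IntervalIntegrable _ MeasureTheory.volume a b := hcont1.intervalIntegrable_of_Icc hab.le
  have hint2 : IntervalIntegrable _ MeasureTheory.volume a b := hcont2.intervalIntegrable_of_Icc hab.le
  -- step 1
  have step1 : u t₀ ≤ ∫ s in a..b, G a b α β t₀ s * (max (q s) 0 * u s) := by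
    rw [heq t₀ ht₀]
    apply intervalIntegral.integral_mono_on hab.le hint1 hint2
    intro x hx
    have hG := G_nonneg hα hβα hβ hab ht₀ hx
    have hu0 := hunn x hx
    exact mul_le_mul_of_nonneg_left
      (mul_le_mul_of_nonneg_right (le_max_left _ _) hu0) hG
  -- pointwise bound on f
  have hfC : ∀ x ∈ Set.Icc a b, (x - a) ^ (α - 1) * (b - x) ^ (α - 1 - β) ≤ Cst := by
    intro x hx
    have h := (f_max hp hr (by linarith [hx.1] : (0:ℝ) ≤ x - a)
      (by linarith [hx.2] : (0:ℝ) ≤ b - x) (by linarith : (0:ℝ) < (x - a) + (b - x))).1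
    rwa [show x - a + (b - x) = b - a from by ring,
      show α - 1 + (α - 1 - β) = 2 * α - 2 - β from by ring] at h
  have hGK : ∀ x ∈ Set.Icc a b, G a b α β t₀ x ≤ K := by
    intro x hx
    refine le_trans (G_le hα hα2 hβα hβ hab ht₀ hx) ?_
    rw [hK]
    apply mul_le_mul_of_nonneg_left _ (by positivity)
    exact div_le_div_of_nonneg_right (hfC x hx) hbar.le
  -- pointwise bound
  have hbound : ∀ x ∈ Set.Icc a b,
      G a b α β t₀ x * (max (q x) 0 * u x) ≤ K * u t₀ * max (q x) 0 := by
    intro x hx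
    have hg0 : 0 ≤ max (q x) 0 * u x := mul_nonneg (le_max_right _ _) (hunn x hx)
    calc G a b α β t₀ x * (max (q x) 0 * u x) ≤ K * (max (q x) 0 * u x) :=
          mul_le_mul_of_nonneg_right (hGK x hx) hg0
      _ ≤ K * (max (q x) 0 * u t₀) := by
          apply mul_le_mul_of_nonneg_left _ hKpos.le
          exact mul_le_mul_of_nonneg_left (hmax x hx) (le_max_right _ _)
      _ = K * u t₀ * max (q x) 0 := by ring
  -- key algebraic identity
  have e1 : ((α - 1) * (b - a) / (2 * α - 2 - β)) ^ (α - 1) * A1 = 1 := by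
    rw [hA1, ← Real.mul_rpow hc1.le (by positivity)]
    rw [show (α - 1) * (b - a) / (2 * α - 2 - β) * ((2 * α - 2 - β) / ((b - a) * (α - 1))) = 1
      from by rw [div_mul_div_comm, div_eq_one_iff_eq (mul_pos hPpos (mul_pos hLpos hp)).ne']; ring]
    exact Real.one_rpow _
  have e2 : ((α - 1 - β) * (b - a) / (2 * α - 2 - β)) ^ (α - 1 - β) * A2
      = (b - a) ^ (α - 1 - β) := by
    rw [hA2, ← Real.mul_rpow hc2.le (by positivity)]
    congr 1
    field_simp
    exact div_self (ne_of_gt (by linarith))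
  have e3 : Cst * (A1 * A2) = (b - a) ^ (α - 1 - β) := by
    rw [hCst, show ((α - 1) * (b - a) / (2 * α - 2 - β)) ^ (α - 1) *
        ((α - 1 - β) * (b - a) / (2 * α - 2 - β)) ^ (α - 1 - β) * (A1 * A2)
      = (((α - 1) * (b - a) / (2 * α - 2 - β)) ^ (α - 1) * A1) *
        (((α - 1 - β) * (b - a) / (2 * α - 2 - β)) ^ (α - 1 - β) * A2) from by ring,
      e1, e2, one_mul]
  have keyid : K * (Real.Gamma α * A1 * A2) = 1 := by
    have hre : K * (Real.Gamma α * A1 * A2)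
        = (Cst * (A1 * A2)) / (b - a) ^ (α - 1 - β) * (Real.Gamma α / Real.Gamma α) := by
      rw [hK]; ring
    rw [hre, e3, div_self hΓ.ne', div_self hbar.ne', one_mul]
  -- case analysis
  by_cases hcase : ∀ x ∈ Set.Icc a b, max (q x) 0 * u x = 0
  · have hzero : ∫ s in a..b, G a b α β t₀ s * (max (q s) 0 * u s) = 0 := by
      have hEq : Set.EqOn (fun s => G a b α β t₀ s * (max (q s) 0 * u s)) 0 (Set.uIcc a b) := by
        intro x hx
        rw [Set.uIcc_of_le hab.le] at hx
        simp [hcase x hx]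
      rw [intervalIntegral.integral_congr hEq]
      simp
    rw [hzero] at step1
    linarith
  · push_neg at hcase
    obtain ⟨s₀, hs₀, hg₀⟩ := hcase
    have hg₀' : 0 < max (q s₀) 0 * u s₀ :=
      (mul_nonneg (le_max_right _ _) (hunn s₀ hs₀)).lt_of_ne (Ne.symm hg₀)
    have hs₀a : a < s₀ := by
      rcases hs₀.1.eq_or_lt with rfl | h
      · rw [hua, mul_zero] at hg₀'
        exact absurd hg₀' (lt_irrefl 0)
      · exact h
    -- find strict point
    have hgc : ContinuousOn (fun s => max (q s) 0 * u s) (Set.Icc a b) := hq'.mul hu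
    have hev : {x | 0 < max (q x) 0 * u x} ∈ nhdsWithin s₀ (Set.Icc a b) :=
      (hgc s₀ hs₀).eventually (eventually_gt_nhds hg₀')
    obtain ⟨ε, hε, hball⟩ := Metric.mem_nhdsWithin_iff.1 hev
    set c := max a (s₀ - ε) with hc
    have hcs : c < s₀ := max_lt hs₀a (by linarith)
    have hprop : ∀ z, c < z → z < s₀ → z ∈ Set.Ioo a b ∧ 0 < max (q z) 0 * u z := by
      intro z h1 h2
      have hza : a < z := lt_of_le_of_lt (le_max_left _ _) h1
      have hzb : z < b := lt_of_lt_of_le h2 hs₀.2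
      have hzball : z ∈ Metric.ball s₀ ε := by
        rw [Metric.mem_ball, Real.dist_eq, abs_lt]
        constructor
        · have : s₀ - ε ≤ c := le_max_right _ _
          linarith
        · linarith
      exact ⟨⟨hza, hzb⟩, hball ⟨hzball, ⟨hza.le, hzb.le⟩⟩⟩
    set sstar := a + (α - 1) * (b - a) / (2 * α - 2 - β) with hsstar
    set x₁ := (c + s₀) / 2 with hx₁
    set x₂ := (3 * c + s₀) / 4 with hx₂
    set s₁ := if x₁ = sstar then x₂ else x₁ with hs₁def
    have hs₁r : c < s₁ ∧ s₁ < s₀ ∧ s₁ ≠ sstar := by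
      rw [hs₁def]
      split_ifs with h
      · refine ⟨by rw [hx₂]; linarith, by rw [hx₂]; linarith, ?_⟩
        rw [← h, hx₂, hx₁]
        intro habs
        have : c = s₀ := by linarith [habs]
        linarith
      · exact ⟨by rw [hx₁]; linarith, by rw [hx₁]; linarith, h⟩
    obtain ⟨hs₁Ioo, hg₁⟩ := hprop s₁ hs₁r.1 hs₁r.2.1
    have hs₁Icc : s₁ ∈ Set.Icc a b := Set.Ioo_subset_Icc_self hs₁Ioo
    -- strict bound at s₁
    have hfC1 : (s₁ - a) ^ (α - 1) * (b - s₁) ^ (α - 1 - β) < Cst := by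
      have h := (f_max hp hr (by linarith [hs₁Icc.1] : (0:ℝ) ≤ s₁ - a)
        (by linarith [hs₁Icc.2] : (0:ℝ) ≤ b - s₁)
        (by linarith : (0:ℝ) < (s₁ - a) + (b - s₁))).2
      rw [show s₁ - a + (b - s₁) = b - a from by ring,
        show α - 1 + (α - 1 - β) = 2 * α - 2 - β from by ring] at h
      apply h
      intro habs
      apply hs₁r.2.2
      rw [hsstar]
      linarith [habs]
    have hGK1 : G a b α β t₀ s₁ < K := by
      refine lt_of_le_of_lt (G_le hα hα2 hβα hβ hab ht₀ hs₁Icc) ?_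
      rw [hK]
      apply mul_lt_mul_of_pos_left _ (by positivity)
      exact div_lt_div_of_pos_right hfC1 hbar
    have hlt : G a b α β t₀ s₁ * (max (q s₁) 0 * u s₁) < K * u t₀ * max (q s₁) 0 := by
      calc G a b α β t₀ s₁ * (max (q s₁) 0 * u s₁) < K * (max (q s₁) 0 * u s₁) :=
            mul_lt_mul_of_pos_right hGK1 hg₁
        _ ≤ K * (max (q s₁) 0 * u t₀) := by
            apply mul_le_mul_of_nonneg_left _ hKpos.le
            exact mul_le_mul_of_nonneg_left (hmax s₁ hs₁Icc) (le_max_right _ _)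
        _ = K * u t₀ * max (q s₁) 0 := by ring
    -- strict integral inequality
    have hcont3 : ContinuousOn (fun s => K * u t₀ * max (q s) 0) (Set.Icc a b) :=
      continuousOn_const.mul hq'
    have step2 : (∫ s in a..b, G a b α β t₀ s * (max (q s) 0 * u s))
        < ∫ s in a..b, K * u t₀ * max (q s) 0 :=
      intervalIntegral.integral_lt_integral_of_continuousOn_of_le_of_exists_lt hab hcont2 hcont3
        (fun x hx => hbound x (Set.Ioc_subset_Icc_self hx)) ⟨s₁, hs₁Icc, hlt⟩
    have step3 : (∫ s in a..b, K * u t₀ * max (q s) 0)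
        = K * u t₀ * ∫ s in a..b, max (q s) 0 := by
      rw [← intervalIntegral.integral_const_mul]
    have step4 : K * u t₀ * (∫ s in a..b, max (q s) 0) ≤ u t₀ := by
      calc K * u t₀ * (∫ s in a..b, max (q s) 0)
          ≤ K * u t₀ * (Real.Gamma α * A1 * A2) :=
            mul_le_mul_of_nonneg_left hint (by positivity)
        _ = u t₀ * (K * (Real.Gamma α * A1 * A2)) := by ring
        _ = u t₀ := by rw [keyid, mul_one]
    rw [step3] at step2
    linarith
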